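/- arXiv:1908.03827 — 2 statements merged into one kernel-verified Lean document; each statement's English description precedes it below -/
import Mathlib

section
/- For the neutral Birth-death process on a connected weighted graph, whose marginal replacement probabilities are e°_ij = p^{(1)}_{ij}/N, the reproductive values are π_i = w_i^{-1} / Σ_{j=1}^N w_j^{-1}; that is, these values satisfy Σ_j e°_ij π_j = Σ_j e°_ji π_i for every i and Σ_i π_i = 1, and they are the unique such solution. In particular they satisfy the relation π_i p^{(1)}_{ji} = π_j p^{(1)}_{ij}. -/
open Finset Filter Asymptotics Topology

namespace Evo

/-- A population state: each of the `N` individuals has type `A` (`true`) or `B` (`false`). -/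
abbrev St (N : ℕ) := Fin N → Bool

/-- A replacement event `(R, α)`: the set `R` of replaced individuals together with a
parentage map (only the values on `R` are relevant). -/
abbrev Event (N : ℕ) := Finset (Fin N) × (Fin N → Fin N)

/-- The extended parentage map `α̃`, equal to `α` on `R` and the identity off `R`. -/
def extMap {N : ℕ} (e : Event N) (i : Fin N) : Fin N := if i ∈ e.1 then e.2 i else i

/-- The state update induced by a replacement event: `x ↦ x_α̃`. -/
def upd {N : ℕ} (e : Event N) (x : St N) : St N := fun i => x (extMap e i)

/-- Boolean values as reals. -/
def bv (b : Bool) : ℝ := if b then 1 else 0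

/-- The all-`A` state. -/
def stA (N : ℕ) : St N := fun _ => true

/-- The all-`B` state. -/
def stB (N : ℕ) : St N := fun _ => false

/-- Transient (non-monoallelic) states, i.e. members of `𝔹_T^N`. -/
def Transient {N : ℕ} (x : St N) : Prop := x ≠ stA N ∧ x ≠ stB N

/-- A replacement rule: for each state, a probability distribution over replacement events. -/
def IsRule {N : ℕ} (p : St N → Event N → ℝ) : Prop :=
  (∀ x e, 0 ≤ p x e) ∧ ∀ x, ∑ e : Event N, p x e = 1

/-- A state-independent distribution over replacement events (a neutral replacement rule). -/
def IsDist {N : ℕ} (p0 : Event N → ℝ) : Prop :=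
  (∀ e, 0 ≤ p0 e) ∧ ∑ e : Event N, p0 e = 1

/-- Transition matrix of the Markov chain induced by a replacement rule. -/
def tmat {N : ℕ} (p : St N → Event N → ℝ) : Matrix (St N) (St N) ℝ :=
  Matrix.of fun x y => ∑ e : Event N, if upd e x = y then p x e else 0

/-- The Fixation Axiom. -/
def FixAxiom {N : ℕ} (p : St N → Event N → ℝ) : Prop :=
  ∃ (i : Fin N) (m : ℕ) (ev : Fin m → Event N), 1 ≤ m ∧
    (∀ k x, 0 < p x (ev k)) ∧ (∃ k, i ∈ (ev k).1) ∧
    (∀ j, (List.ofFn fun k => extMap (ev k)).foldr (· ∘ ·) id j = i)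

/-- The sojourn time `t_ξ(x)`: expected number of visits to `x` prior to absorption,
starting from `ξ` (expressed as `Σ_t (P^t)(ξ, x)`). -/
noncomputable def sojourn {N : ℕ} (p : St N → Event N → ℝ) (ξ x : St N) : ℝ :=
  ∑' t : ℕ, (tmat p ^ t) ξ x

/-- The weighted degree `w_i = Σ_j w_ij` of vertex `i`. -/
def wdeg {N : ℕ} (w : Fin N → Fin N → ℝ) (i : Fin N) : ℝ := ∑ j, w i j

/-- The one-step random-walk probability `p^{(1)}_{ij} = w_ij / w_i`. -/
noncomputable def p1 {N : ℕ} (w : Fin N → Fin N → ℝ) (i j : Fin N) : ℝ := w i j / wdeg w i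

/-- The one-step random-walk matrix (whose `n`-th power gives `p^{(n)}`). -/
noncomputable def p1m {N : ℕ} (w : Fin N → Fin N → ℝ) : Matrix (Fin N) (Fin N) ℝ :=
  Matrix.of fun i j => p1 w i j

/-- Connectedness of the weighted graph. -/
def Conn {N : ℕ} (w : Fin N → Fin N → ℝ) : Prop :=
  ∀ i j, Relation.ReflTransGen (fun a b => 0 < w a b) i j

/-- The reproductive values for Birth-death updating: `π_i = w_i⁻¹ / Σ_j w_j⁻¹`. -/
noncomputable def rvBD {N : ℕ} (w : Fin N → Fin N → ℝ) (i : Fin N) : ℝ :=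
  (wdeg w i)⁻¹ / ∑ j, (wdeg w j)⁻¹

/-- Maximum principle: a harmonic function on a connected weighted graph is constant. -/
lemma harmonic_const {N : ℕ} (hN : 0 < N) (w : Fin N → Fin N → ℝ)
    (hnn : ∀ i j, 0 ≤ w i j) (hdeg : ∀ i, 0 < wdeg w i) (hconn : Conn w)
    (f : Fin N → ℝ)
    (hf : ∀ i, ∑ j, (w i j / wdeg w j) * f j = f i * ∑ j, (w i j / wdeg w j)) :
    ∀ a b, f a = f b := by
  haveI : Nonempty (Fin N) := Fin.pos_iff_nonempty.mp hN
  obtain ⟨i0, hi0⟩ := Finite.exists_max f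
  have step : ∀ a, f a = f i0 → ∀ b, 0 < w a b → f b = f i0 := by
    intro a ha b hwb
    have h := hf a
    rw [ha] at h
    have hz : ∑ j, (w a j / wdeg w j) * (f i0 - f j) = 0 := by
      simp only [mul_sub]
      rw [Finset.sum_sub_distrib, ← Finset.sum_mul, sub_eq_zero, mul_comm]
      exact h.symm
    have hnn' : ∀ j ∈ Finset.univ, 0 ≤ (w a j / wdeg w j) * (f i0 - f j) := by
      intro j _
      exact mul_nonneg (div_nonneg (hnn a j) (hdeg j).le) (sub_nonneg.mpr (hi0 j))
    have := (Finset.sum_eq_zero_iff_of_nonneg hnn').mp hz b (Finset.mem_univ b)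
    have hc : 0 < w a b / wdeg w b := div_pos hwb (hdeg b)
    have := (mul_eq_zero.mp this).resolve_left (ne_of_gt hc)
    linarith [sub_eq_zero.mp this]
  have key : ∀ b, f b = f i0 := by
    intro b
    have := hconn i0 b
    induction this with
    | refl => rfl
    | tail _ hwb ih => exact step _ ih _ hwb
  intro a b; rw [key a, key b]

/-- for the neutral Birth-death process (with `e°_ij = p^{(1)}_{ij}/N`) on a
connected weighted graph, the reproductive values are `π_i = w_i⁻¹ / Σ_j w_j⁻¹`: they
satisfy the RV equations with `Σ_i π_i = 1`, are the unique such solution, and satisfy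
`π_i p^{(1)}_{ji} = π_j p^{(1)}_{ij}`. -/
theorem statement12 {N : ℕ} (hN : 0 < N) (w : Fin N → Fin N → ℝ)
    (hsym : ∀ i j, w i j = w j i) (hnn : ∀ i j, 0 ≤ w i j)
    (hdeg : ∀ i, 0 < wdeg w i) (hconn : Conn w) :
    (∀ i, ∑ j, (p1 w i j / N) * rvBD w j = ∑ j, (p1 w j i / N) * rvBD w i) ∧
    (∑ i, rvBD w i = 1) ∧
    (∀ π' : Fin N → ℝ,
      (∀ i, ∑ j, (p1 w i j / N) * π' j = ∑ j, (p1 w j i / N) * π' i) →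
      (∑ i, π' i = 1) → π' = rvBD w) ∧
    (∀ i j, rvBD w i * p1 w j i = rvBD w j * p1 w i j) := by
  haveI : Nonempty (Fin N) := Fin.pos_iff_nonempty.mp hN
  have hS : 0 < ∑ j, (wdeg w j)⁻¹ :=
    Finset.sum_pos (fun j _ => inv_pos.mpr (hdeg j)) Finset.univ_nonempty
  have hdb : ∀ i j, rvBD w i * p1 w j i = rvBD w j * p1 w i j := by
    intro i j
    unfold rvBD p1
    rw [hsym j i]
    field_simp
  refine ⟨?_, ?_, ?_, hdb⟩
  · intro i
    apply Finset.sum_congr rfl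
    intro j _
    have := hdb j i
    rw [mul_comm (rvBD w j) (p1 w i j), mul_comm (rvBD w i) (p1 w j i)] at this
    rw [div_mul_eq_mul_div, div_mul_eq_mul_div, this]
  · unfold rvBD
    rw [← Finset.sum_div, div_self (ne_of_gt hS)]
  · intro π' hπ hsum
    set f : Fin N → ℝ := fun i => wdeg w i * π' i with hfdef
    have hf : ∀ i, ∑ j, (w i j / wdeg w j) * f j = f i * ∑ j, (w i j / wdeg w j) := by
      intro i
      have h := hπ i
      have h1 : ∑ j, (p1 w i j / N) * π' j = (∑ j, p1 w i j * π' j) / N := by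
        rw [Finset.sum_div]
        exact Finset.sum_congr rfl fun j _ => by ring
      have h2 : ∑ j, (p1 w j i / N) * π' i = ((∑ j, p1 w j i) * π' i) / N := by
        rw [Finset.sum_mul, Finset.sum_div]
        exact Finset.sum_congr rfl fun j _ => by ring
      have hNne : (N:ℝ) ≠ 0 := Nat.cast_ne_zero.mpr hN.ne'
      rw [h1, h2, div_eq_div_iff hNne hNne] at h
      have h3 : ∑ j, p1 w i j * π' j = (∑ j, p1 w j i) * π' i :=
        mul_right_cancel₀ hNne h
      have hwi := (hdeg i).ne'
      have e1 : ∀ j, p1 w i j * π' j = (w i j / wdeg w j) * f j / wdeg w i := by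
        intro j
        unfold p1
        have := (hdeg j).ne'
        field_simp [hfdef]
        ring
      have e2 : ∀ j, p1 w j i = w i j / wdeg w j := by
        intro j; unfold p1; rw [hsym j i]
      calc ∑ j, (w i j / wdeg w j) * f j
          = (∑ j, p1 w i j * π' j) * wdeg w i := by
            rw [Finset.sum_mul]
            exact Finset.sum_congr rfl fun j _ => by
              rw [e1 j, div_mul_cancel₀ _ hwi]
        _ = (∑ j, w i j / wdeg w j) * π' i * wdeg w i := by
            rw [h3]
            congr 2
            exact Finset.sum_congr rfl fun j _ => e2 j
        _ = f i * ∑ j, (w i j / wdeg w j) := by rw [hfdef]; ring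
    have hconst := harmonic_const hN w hnn hdeg hconn f hf
    -- f is constant, say c = f i0
    obtain ⟨i0⟩ := ‹Nonempty (Fin N)›
    have hπi : ∀ i, π' i = f i0 * (wdeg w i)⁻¹ := by
      intro i
      have h : wdeg w i * π' i = f i0 := hconst i i0
      have hwi := (hdeg i).ne'
      field_simp
      linear_combination h
    have hsum' : f i0 * ∑ j, (wdeg w j)⁻¹ = 1 := by
      rw [Finset.mul_sum, ← hsum]
      exact Finset.sum_congr rfl fun j _ => (hπi j).symm
    have hc : f i0 = (∑ j, (wdeg w j)⁻¹)⁻¹ := eq_inv_of_mul_eq_one_left hsum'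
    funext i
    rw [hπi i, hc]
    unfold rvBD
    rw [div_eq_mul_inv, mul_comm]

end Evo
end

section
/- For the donation game on an unweighted regular graph of degree d with death-Birth updating, the sojourn quantities satisfy η^ξ_{(1)} := (1/N) Σ_{i,j} p^{(1)}_{ij} η^ξ_{ij} = (1/2)|ξ|(N − |ξ|), where |ξ| := Σ_i ξ_i, for the unique solution (η^ξ_{ij}) of the system η^ξ_{ij} = (1/2)(|ξ| − N ξ_i ξ_j) + (1/2) Σ_k (p^{(1)}_{ik} η^ξ_{kj} + p^{(1)}_{jk} η^ξ_{ik}) + (δ_{ij}/2)(|ξ| − N ξ_i + 2 Σ_k p^{(1)}_{ik}(η^ξ_{kk} − η^ξ_{ik})) together with Σ_i η^ξ_{ii} = 0 (δ_{ij} the Kronecker delta). -/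
open Finset Filter Asymptotics Topology

namespace Evo

/-- for the donation game on an unweighted connected regular graph of degree
`d` with death-Birth updating, the unique solution of the sojourn system satisfies
`η^ξ_{(1)} = (1/N) Σ_{i,j} p^{(1)}_{ij} η^ξ_{ij} = |ξ|(N − |ξ|)/2`. -/
theorem statement16 {N : ℕ} (d : ℕ) (hd : 0 < d) (w : Fin N → Fin N → ℝ)
    (h01 : ∀ i j, w i j = 0 ∨ w i j = 1) (hloop : ∀ i, w i i = 0)
    (hsym : ∀ i j, w i j = w j i) (hreg : ∀ i, wdeg w i = d) (hconn : Conn w)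
    (ξ : St N)
    (η : Fin N → Fin N → ℝ)
    (hη : ∀ i j, η i j
      = (1 / 2) * ((∑ v, bv (ξ v)) - (N : ℝ) * bv (ξ i) * bv (ξ j))
        + (1 / 2) * ∑ k, (p1 w i k * η k j + p1 w j k * η i k)
        + (if i = j then
            (1 / 2) * ((∑ v, bv (ξ v)) - (N : ℝ) * bv (ξ i)
              + 2 * ∑ k, p1 w i k * (η k k - η i k))
          else 0))
    (hnorm : ∑ i, η i i = 0) :
    (1 / (N : ℝ)) * ∑ i, ∑ j, p1 w i j * η i j
      = (1 / 2) * (∑ v, bv (ξ v)) * ((N : ℝ) - ∑ v, bv (ξ v)) := by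
  rcases Nat.eq_zero_or_pos N with hN | hN
  · subst hN; simp
  have hdR : (d:ℝ) ≠ 0 := Nat.cast_ne_zero.mpr hd.ne'
  have hNR : (N:ℝ) ≠ 0 := Nat.cast_ne_zero.mpr hN.ne'
  set A := ∑ v, bv (ξ v) with hA
  have hrow : ∀ i : Fin N, ∑ k, p1 w i k = 1 := by
    intro i
    have h1 : ∑ k, p1 w i k = (∑ k, w i k) / (d:ℝ) := by
      rw [Finset.sum_div]
      exact Finset.sum_congr rfl fun k _ => by rw [p1, hreg]
    have h2 : (∑ k, w i k) = (d:ℝ) := by rw [← wdeg, hreg]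
    rw [h1, h2, div_self hdR]
  have hp1sym : ∀ i j, p1 w i j = p1 w j i := fun i j => by
    rw [p1, p1, hreg, hreg, hsym]
  have hcol : ∀ k : Fin N, ∑ i, p1 w i k = 1 := fun k => by
    rw [Finset.sum_congr rfl fun i _ => hp1sym i k]; exact hrow k
  set P := ∑ i, ∑ j, p1 w i j * η i j with hP
  set S := ∑ i : Fin N, ∑ j, η i j with hS
  have split : S = (∑ i, ∑ j, (1/2) * (A - (N:ℝ) * bv (ξ i) * bv (ξ j)))
      + (∑ i, ∑ j, (1/2) * ∑ k, (p1 w i k * η k j + p1 w j k * η i k))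
      + (∑ i, ∑ j, (if i = j then
          (1/2) * (A - (N:ℝ) * bv (ξ i) + 2 * ∑ k, p1 w i k * (η k k - η i k)) else 0)) := by
    rw [hS, ← Finset.sum_add_distrib, ← Finset.sum_add_distrib]
    refine Finset.sum_congr rfl fun i _ => ?_
    rw [← Finset.sum_add_distrib, ← Finset.sum_add_distrib]
    exact Finset.sum_congr rfl fun j _ => hη i j
  have hT1 : ∑ i, ∑ j, (1/2) * (A - (N:ℝ) * bv (ξ i) * bv (ξ j))
      = (1/2) * ((N:ℝ) * ((N:ℝ) * A) - (N:ℝ) * (A * A)) := by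
    have inner : ∀ i : Fin N, ∑ j, (1/2) * (A - (N:ℝ) * bv (ξ i) * bv (ξ j))
        = (1/2) * ((N:ℝ) * A - (N:ℝ) * bv (ξ i) * A) := by
      intro i
      rw [← Finset.mul_sum, Finset.sum_sub_distrib, Finset.sum_const, Finset.card_univ,
        Fintype.card_fin, nsmul_eq_mul, ← Finset.mul_sum]
    rw [Finset.sum_congr rfl fun i _ => inner i, ← Finset.mul_sum, Finset.sum_sub_distrib,
      Finset.sum_const, Finset.card_univ, Fintype.card_fin, nsmul_eq_mul]
    have : ∑ i, (N:ℝ) * bv (ξ i) * A = (N:ℝ) * (A * A) := by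
      calc ∑ i, (N:ℝ) * bv (ξ i) * A = ∑ i, ((N:ℝ) * A) * bv (ξ i) :=
            Finset.sum_congr rfl fun i _ => by ring
        _ = ((N:ℝ) * A) * A := by rw [← Finset.mul_sum]
        _ = (N:ℝ) * (A * A) := by ring
    rw [this]
  have hT2 : ∑ i, ∑ j, (1/2) * ∑ k, (p1 w i k * η k j + p1 w j k * η i k) = S := by
    have h1 : ∑ i : Fin N, ∑ j, ∑ k, p1 w i k * η k j = S := by
      calc ∑ i : Fin N, ∑ j, ∑ k, p1 w i k * η k j
          = ∑ i : Fin N, ∑ k, ∑ j, p1 w i k * η k j :=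
            Finset.sum_congr rfl fun i _ => Finset.sum_comm
        _ = ∑ i : Fin N, ∑ k, p1 w i k * ∑ j, η k j := by
            refine Finset.sum_congr rfl fun i _ => Finset.sum_congr rfl fun k _ => ?_
            rw [Finset.mul_sum]
        _ = ∑ k : Fin N, ∑ i, p1 w i k * ∑ j, η k j := Finset.sum_comm
        _ = ∑ k : Fin N, (∑ i, p1 w i k) * ∑ j, η k j := by
            refine Finset.sum_congr rfl fun k _ => ?_
            rw [Finset.sum_mul]
        _ = ∑ k : Fin N, ∑ j, η k j := by
            refine Finset.sum_congr rfl fun k _ => ?_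
            rw [hcol k, one_mul]
        _ = S := hS.symm
    have h2 : ∑ i : Fin N, ∑ j, ∑ k, p1 w j k * η i k = S := by
      calc ∑ i : Fin N, ∑ j, ∑ k, p1 w j k * η i k
          = ∑ i : Fin N, ∑ k, ∑ j, p1 w j k * η i k :=
            Finset.sum_congr rfl fun i _ => Finset.sum_comm
        _ = ∑ i : Fin N, ∑ k, (∑ j, p1 w j k) * η i k := by
            refine Finset.sum_congr rfl fun i _ => Finset.sum_congr rfl fun k _ => ?_
            rw [Finset.sum_mul]
        _ = ∑ i : Fin N, ∑ k, η i k := by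
            refine Finset.sum_congr rfl fun i _ => Finset.sum_congr rfl fun k _ => ?_
            rw [hcol k, one_mul]
        _ = S := hS.symm
    calc ∑ i, ∑ j, (1/2) * ∑ k, (p1 w i k * η k j + p1 w j k * η i k)
        = (1/2) * ∑ i, ∑ j, ∑ k, (p1 w i k * η k j + p1 w j k * η i k) := by
          rw [Finset.mul_sum]
          exact Finset.sum_congr rfl fun i _ => by rw [Finset.mul_sum]
      _ = (1/2) * ((∑ i : Fin N, ∑ j, ∑ k, p1 w i k * η k j)
            + ∑ i : Fin N, ∑ j, ∑ k, p1 w j k * η i k) := by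
          congr 1
          simp only [Finset.sum_add_distrib]
      _ = S := by rw [h1, h2]; ring
  have hQ : ∑ i : Fin N, ∑ k, p1 w i k * η k k = 0 := by
    calc ∑ i : Fin N, ∑ k, p1 w i k * η k k
        = ∑ k : Fin N, ∑ i, p1 w i k * η k k := Finset.sum_comm
      _ = ∑ k : Fin N, (∑ i, p1 w i k) * η k k := by
          refine Finset.sum_congr rfl fun k _ => ?_
          rw [Finset.sum_mul]
      _ = ∑ k : Fin N, η k k := by
          refine Finset.sum_congr rfl fun k _ => ?_
          rw [hcol k, one_mul]
      _ = 0 := hnorm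
  have hD : ∑ i : Fin N, ∑ k, p1 w i k * (η k k - η i k) = 0 - P := by
    have hsplit : ∀ (i k : Fin N), p1 w i k * (η k k - η i k)
        = p1 w i k * η k k - p1 w i k * η i k := fun i k => by ring
    simp only [hsplit, Finset.sum_sub_distrib]
    rw [hQ, hP]
  have hT3 : ∑ i, ∑ j, (if i = j then
      (1/2) * (A - (N:ℝ) * bv (ξ i) + 2 * ∑ k, p1 w i k * (η k k - η i k)) else 0) = 0 - P := by
    have hdiag : ∀ i : Fin N, (∑ j, (if i = j then
        (1/2) * (A - (N:ℝ) * bv (ξ i) + 2 * ∑ k, p1 w i k * (η k k - η i k)) else 0))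
        = (1/2) * (A - (N:ℝ) * bv (ξ i) + 2 * ∑ k, p1 w i k * (η k k - η i k)) := by
      intro i
      simp [Finset.sum_ite_eq]
    rw [Finset.sum_congr rfl fun i _ => hdiag i, ← Finset.mul_sum]
    rw [Finset.sum_add_distrib, Finset.sum_sub_distrib, Finset.sum_const, Finset.card_univ,
      Fintype.card_fin, nsmul_eq_mul, ← Finset.mul_sum, ← Finset.mul_sum, ← hA, hD]
    ring
  rw [hT1, hT2, hT3] at split
  have hPval : P = (1/2) * ((N:ℝ) * ((N:ℝ) * A) - (N:ℝ) * (A * A)) := by linarith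
  rw [hPval]
  field_simp


end Evo
end
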